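/- Let n ≥ m be positive integers, k = n - m + 1, and f : ℝⁿ → ℝᵐ a function. Then the set f(A) has Lebesgue measure zero in ℝᵐ, where A = {x ∈ ℝⁿ : lim_{h→0} f(x+h)-f(x))/|h|^k = 0}, i.e. the set of points where f has a Taylor expansion of order k equal to the constant polynomial f(x). -/

import Mathlib

open MeasureTheory Asymptotics Filter Set Metric
open scoped NNReal ENNReal

/-- Key covering estimate: if on `S`, pairs of points at distance `≤ δ` satisfy a Hölder
bound of exponent `k` with constant `C`, and `n ≤ k * m`, then the image of `S ∩ closedBall 0 R`
has volume at most `C ^ m * volume (closedBall 0 (R + δ))`. -/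
lemma zero_jet_aux (n m k : ℕ) (hk1 : 0 < k) (hnkm : n ≤ k * m)
    (f : (Fin n → ℝ) → (Fin m → ℝ)) (C : ℝ≥0) (δ : ℝ) (hδ : 0 < δ) (R : ℝ)
    (S : Set (Fin n → ℝ))
    (hS : ∀ x ∈ S, ∀ y ∈ S, dist x y ≤ δ → dist (f x) (f y) ≤ C * dist x y ^ k) :
    volume (f '' (S ∩ closedBall 0 R)) ≤
      (C : ℝ≥0∞) ^ (m : ℝ) * volume (closedBall (0 : Fin n → ℝ) (R + δ)) := by
  -- half-open grid cells of side δ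
  set cell : (Fin n → ℤ) → Set (Fin n → ℝ) :=
    fun v => Set.univ.pi fun i => Ico (v i * δ) (v i * δ + δ) with hcell
  have cell_meas : ∀ v, MeasurableSet (cell v) :=
    fun v => MeasurableSet.univ_pi fun i => measurableSet_Ico
  have cell_mem : ∀ (v : Fin n → ℤ) (x : Fin n → ℝ),
      x ∈ cell v ↔ ∀ i, v i = ⌊x i / δ⌋ := by
    intro v x
    simp only [hcell, Set.mem_pi, Set.mem_univ, true_imp_iff, Set.mem_Ico]
    refine forall_congr' fun i => ?_
    rw [eq_comm, Int.floor_eq_iff]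
    constructor
    · rintro ⟨h1, h2⟩
      exact ⟨(le_div_iff₀ hδ).2 h1, by rw [div_lt_iff₀ hδ]; linarith⟩
    · rintro ⟨h1, h2⟩
      refine ⟨(le_div_iff₀ hδ).1 h1, ?_⟩
      rw [div_lt_iff₀ hδ] at h2; linarith
  have cell_cover : ∀ x : Fin n → ℝ, x ∈ cell fun i => ⌊x i / δ⌋ :=
    fun x => (cell_mem _ x).2 fun i => rfl
  have cell_disj : Pairwise (Function.onFun Disjoint cell) := by
    intro v w hvw
    simp only [Function.onFun]
    rw [Set.disjoint_left]
    intro x hxv hxw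
    exact hvw (funext fun i => ((cell_mem v x).1 hxv i).trans ((cell_mem w x).1 hxw i).symm)
  have cell_diam : ∀ v, ∀ x ∈ cell v, ∀ y ∈ cell v, dist x y ≤ δ := by
    intro v x hx y hy
    rw [dist_pi_le_iff hδ.le]
    intro i
    have hxi := hx i (Set.mem_univ i)
    have hyi := hy i (Set.mem_univ i)
    simp only [Set.mem_Ico] at hxi hyi
    rw [Real.dist_eq, abs_sub_le_iff]
    constructor <;> linarith [hxi.1, hxi.2, hyi.1, hyi.2]
  -- Hölder estimate on each piece
  set piece : (Fin n → ℤ) → Set (Fin n → ℝ) :=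
    fun v => S ∩ closedBall 0 R ∩ cell v with hpiece
  have holder : ∀ v, HolderOnWith C (k : ℝ≥0) f (piece v) := by
    intro v x hx y hy
    have hdxy : dist x y ≤ δ := cell_diam v x hx.2 y hy.2
    have hd : dist (f x) (f y) ≤ (C : ℝ) * dist x y ^ k := hS x hx.1.1 y hy.1.1 hdxy
    rw [edist_dist, edist_dist]
    calc ENNReal.ofReal (dist (f x) (f y)) ≤ ENNReal.ofReal ((C : ℝ) * dist x y ^ k) :=
          ENNReal.ofReal_le_ofReal hd
      _ = (C : ℝ≥0∞) * ENNReal.ofReal (dist x y) ^ ((k : ℝ≥0) : ℝ) := by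
          rw [ENNReal.ofReal_mul C.coe_nonneg,
            ENNReal.ofReal_rpow_of_nonneg dist_nonneg (by positivity)]
          norm_num [ENNReal.ofReal_coe_nnreal, Real.rpow_natCast]
  have key : ∀ v, volume (f '' piece v) ≤
      (C : ℝ≥0∞) ^ (m : ℝ) * volume (cell v ∩ closedBall (0 : Fin n → ℝ) (R + δ)) := by
    intro v
    have himg := (holder v).hausdorffMeasure_image_le
      (by exact_mod_cast hk1) (d := (m : ℝ)) (Nat.cast_nonneg m)
    have hvol : (μH[(m : ℝ)] : Measure (Fin m → ℝ)) = volume := by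
      have := hausdorffMeasure_pi_real (ι := Fin m)
      rwa [Fintype.card_fin] at this
    have hcast : ((k : ℝ≥0) : ℝ) * (m : ℝ) = ((k * m : ℕ) : ℝ) := by push_cast; ring
    rw [hcast] at himg
    have hsub : piece v ⊆ cell v ∩ closedBall (0 : Fin n → ℝ) (R + δ) := by
      intro x hx
      exact ⟨hx.2, closedBall_subset_closedBall (by linarith) hx.1.2⟩
    have hbound : μH[((k * m : ℕ) : ℝ)] (piece v) ≤
        volume (cell v ∩ closedBall (0 : Fin n → ℝ) (R + δ)) := by
      rcases eq_or_lt_of_le hnkm with heq | hlt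
      · have hvoln : (μH[((k * m : ℕ) : ℝ)] : Measure (Fin n → ℝ)) = volume := by
          have := hausdorffMeasure_pi_real (ι := Fin n)
          rw [Fintype.card_fin] at this
          rw [← heq]; exact this
        rw [hvoln]
        exact measure_mono hsub
      · have hdim : dimH (piece v) < ((k * m : ℕ) : ℝ≥0) := by
          refine lt_of_le_of_lt (le_trans (dimH_mono (Set.subset_univ _))
            (Real.dimH_univ_pi_fin n).le) ?_
          exact_mod_cast hlt
        have : μH[(((k * m : ℕ) : ℝ≥0) : ℝ)] (piece v) = 0 :=
          hausdorffMeasure_of_dimH_lt hdim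
        rw [show (((k * m : ℕ) : ℝ≥0) : ℝ) = ((k * m : ℕ) : ℝ) by push_cast; ring] at this
        rw [this]
        exact zero_le
    calc volume (f '' piece v) = μH[(m : ℝ)] (f '' piece v) := by rw [hvol]
      _ ≤ (C : ℝ≥0∞) ^ (m : ℝ) * μH[((k * m : ℕ) : ℝ)] (piece v) := himg
      _ ≤ (C : ℝ≥0∞) ^ (m : ℝ) * volume (cell v ∩ closedBall (0 : Fin n → ℝ) (R + δ)) :=
          mul_le_mul_right hbound _
  -- sum over the (countably many) cells
  have hcover : S ∩ closedBall 0 R = ⋃ v, piece v := by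
    ext x
    simp only [Set.mem_iUnion, hpiece, Set.mem_inter_iff]
    constructor
    · intro hx; exact ⟨fun i => ⌊x i / δ⌋, hx, cell_cover x⟩
    · rintro ⟨v, hx, _⟩; exact hx
  calc volume (f '' (S ∩ closedBall 0 R)) = volume (⋃ v, f '' piece v) := by
        rw [hcover, Set.image_iUnion]
    _ ≤ ∑' v, volume (f '' piece v) := measure_iUnion_le _
    _ ≤ ∑' v, (C : ℝ≥0∞) ^ (m : ℝ) * volume (cell v ∩ closedBall (0 : Fin n → ℝ) (R + δ)) :=
        ENNReal.tsum_le_tsum key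
    _ = (C : ℝ≥0∞) ^ (m : ℝ) *
        ∑' v, volume (cell v ∩ closedBall (0 : Fin n → ℝ) (R + δ)) := ENNReal.tsum_mul_left
    _ = (C : ℝ≥0∞) ^ (m : ℝ) *
        volume (⋃ v, cell v ∩ closedBall (0 : Fin n → ℝ) (R + δ)) := by
        have hmeq : volume (⋃ v, cell v ∩ closedBall (0 : Fin n → ℝ) (R + δ)) =
            ∑' v, volume (cell v ∩ closedBall (0 : Fin n → ℝ) (R + δ)) :=
          measure_iUnion
            (fun v w hvw => Disjoint.mono Set.inter_subset_left Set.inter_subset_left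
              (cell_disj hvw))
            (fun v => (cell_meas v).inter measurableSet_closedBall)
        rw [hmeq]
    _ ≤ (C : ℝ≥0∞) ^ (m : ℝ) * volume (closedBall (0 : Fin n → ℝ) (R + δ)) := by
        refine mul_le_mul_right (measure_mono ?_) _
        exact Set.iUnion_subset fun v => Set.inter_subset_right

theorem zero_jet_points_null_image
    (n m : ℕ) (hm : 0 < m) (hnm : m ≤ n) (k : ℕ) (hk : k = n - m + 1)
    (f : (Fin n → ℝ) → (Fin m → ℝ)) :
    volume (f '' {x | (fun h => f (x + h) - f x) =o[nhds 0] fun h => ‖h‖ ^ k}) = 0 := by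
  set A : Set (Fin n → ℝ) :=
    {x | (fun h => f (x + h) - f x) =o[nhds 0] fun h => ‖h‖ ^ k} with hA
  have hk1 : 0 < k := by omega
  have hnkm : n ≤ k * m := by
    have h1 : n - m ≤ (n - m) * m := Nat.le_mul_of_pos_right _ hm
    have : k * m = (n - m) * m + m := by rw [hk, add_mul, one_mul]
    omega
  -- the approximating sets
  set Acj : ℝ≥0 → ℕ → Set (Fin n → ℝ) := fun C j =>
    {x | ∀ y, dist y x ≤ 1 / (j + 1) → dist (f y) (f x) ≤ (C : ℝ) * dist y x ^ k} with hAcj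
  have hmono : ∀ C : ℝ≥0, Monotone (Acj C) := by
    intro C j j' hjj' x hx y hy
    refine hx y (hy.trans ?_)
    apply one_div_le_one_div_of_le (by positivity)
    exact_mod_cast by exact_mod_cast add_le_add_left (Nat.cast_le.2 hjj') 1
  have hsubA : ∀ C : ℝ≥0, 0 < C → A ⊆ ⋃ j, Acj C j := by
    intro C hC x hx
    have ho := (isLittleO_iff.1 hx) (c := (C : ℝ)) (by exact_mod_cast hC)
    rw [Metric.eventually_nhds_iff] at ho
    obtain ⟨ε, hε, hP⟩ := ho
    obtain ⟨j, hj⟩ := exists_nat_one_div_lt hε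
    refine Set.mem_iUnion.2 ⟨j, fun y hy => ?_⟩
    have hdy : dist (y - x) 0 < ε := by
      rw [dist_zero_right, ← dist_eq_norm]
      exact lt_of_le_of_lt hy hj
    calc dist (f y) (f x) = ‖f y - f x‖ := dist_eq_norm _ _
      _ ≤ (C : ℝ) * ‖‖y - x‖ ^ k‖ := by
          have h2 := hP hdy
          rw [add_sub_cancel] at h2
          exact h2
      _ = (C : ℝ) * dist y x ^ k := by
          rw [Real.norm_eq_abs, abs_of_nonneg (by positivity), dist_eq_norm]
  -- image of A intersected with a ball is null
  have hball : ∀ R : ℕ, volume (f '' (A ∩ closedBall (0 : Fin n → ℝ) R)) = 0 := by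
    intro R
    set V : ℝ≥0∞ := volume (closedBall (0 : Fin n → ℝ) (R + 1)) with hV
    have hVfin : V ≠ ∞ := measure_closedBall_lt_top.ne
    -- bound by C * V for every positive C ≤ 1
    have hboundC : ∀ C : ℝ≥0, 0 < C → C ≤ 1 →
        volume (f '' (A ∩ closedBall (0 : Fin n → ℝ) R)) ≤ (C : ℝ≥0∞) * V := by
      intro C hC hC1
      have hsub : f '' (A ∩ closedBall (0 : Fin n → ℝ) R) ⊆
          ⋃ j, f '' (Acj C j ∩ closedBall (0 : Fin n → ℝ) R) := by
        rw [← Set.image_iUnion, ← Set.iUnion_inter]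
        exact Set.image_mono (Set.inter_subset_inter_left _ (hsubA C hC))
      refine le_trans (measure_mono hsub) ?_
      have hmono' : Monotone fun j => f '' (Acj C j ∩ closedBall (0 : Fin n → ℝ) R) :=
        fun j j' hjj' => Set.image_mono (Set.inter_subset_inter_left _ (hmono C hjj'))
      rw [hmono'.measure_iUnion]
      refine iSup_le fun j => ?_
      have hδ : (0 : ℝ) < 1 / (j + 1) := by positivity
      have haux := zero_jet_aux n m k hk1 hnkm f C (1 / (j + 1)) hδ R (Acj C j) ?_
      · refine le_trans haux ?_
        have h1 : volume (closedBall (0 : Fin n → ℝ) (R + 1 / (j + 1))) ≤ V := by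
          refine measure_mono (closedBall_subset_closedBall ?_)
          have : (1 : ℝ) / (j + 1) ≤ 1 := by
            rw [div_le_one (by positivity)]; linarith [Nat.cast_nonneg (α := ℝ) j]
          linarith
        refine le_trans (mul_le_mul_right h1 _) (mul_le_mul_left ?_ _)
        calc (C : ℝ≥0∞) ^ (m : ℝ) ≤ (C : ℝ≥0∞) ^ (1 : ℝ) :=
              ENNReal.rpow_le_rpow_of_exponent_ge (by exact_mod_cast hC1)
                (by exact_mod_cast hm)
          _ = (C : ℝ≥0∞) := ENNReal.rpow_one _
      · intro x hx y hy hxy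
        have := hx y (by rwa [dist_comm])
        rwa [dist_comm (f x) (f y), dist_comm x y]
    -- conclude by letting C → 0
    by_contra h0
    have hforall : ∀ i : ℕ,
        volume (f '' (A ∩ closedBall (0 : Fin n → ℝ) R)) * ((i : ℝ≥0∞) + 1) ≤ V := by
      intro i
      have hCpos : (0 : ℝ≥0) < ((i : ℝ≥0) + 1)⁻¹ := by positivity
      have hC1 : (((i : ℝ≥0) + 1))⁻¹ ≤ 1 := by
        rw [inv_le_one_iff₀]
        right
        exact le_add_of_nonneg_left zero_le
      have hb := hboundC _ hCpos hC1
      have hCone : ((((i : ℝ≥0) + 1)⁻¹ : ℝ≥0) : ℝ≥0∞) * ((i : ℝ≥0∞) + 1) = 1 := by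
        rw [show ((i : ℝ≥0∞) + 1) = ((((i : ℝ≥0) + 1) : ℝ≥0) : ℝ≥0∞) by push_cast; ring,
          ← ENNReal.coe_mul, inv_mul_cancel₀ (by positivity), ENNReal.coe_one]
      calc volume (f '' (A ∩ closedBall (0 : Fin n → ℝ) R)) * ((i : ℝ≥0∞) + 1)
          ≤ (((((i : ℝ≥0) + 1)⁻¹ : ℝ≥0) : ℝ≥0∞) * V) * ((i : ℝ≥0∞) + 1) :=
            mul_le_mul_left hb _
        _ = (((((i : ℝ≥0) + 1)⁻¹ : ℝ≥0) : ℝ≥0∞) * ((i : ℝ≥0∞) + 1)) * V := by ring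
        _ = V := by rw [hCone, one_mul]
    have hge : ∀ i : ℕ, (i : ℝ≥0∞) + 1 ≤
        V / volume (f '' (A ∩ closedBall (0 : Fin n → ℝ) R)) := by
      intro i
      rw [ENNReal.le_div_iff_mul_le (Or.inl h0) (Or.inr hVfin), mul_comm]
      exact hforall i
    obtain ⟨N, hN⟩ := ENNReal.exists_nat_gt
      (ENNReal.div_lt_top hVfin h0).ne
    exact absurd (le_trans (le_add_of_nonneg_right zero_le') (hge N)) (not_le.2 hN)
  -- conclude
  have hcov : f '' A ⊆ ⋃ R : ℕ, f '' (A ∩ closedBall (0 : Fin n → ℝ) R) := by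
    rintro y ⟨x, hx, rfl⟩
    obtain ⟨R, hR⟩ := exists_nat_ge ‖x‖
    exact Set.mem_iUnion.2 ⟨R, ⟨x, ⟨hx, by rwa [mem_closedBall, dist_zero_right]⟩, rfl⟩⟩
  refine le_antisymm (le_trans (measure_mono hcov) ?_) zero_le
  rw [measure_iUnion_null hball]
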